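/- Suppose a sequence of packets j = 1,…,N is routed, where routing packet j along path p_j updates congestion by c(e) ← c(e)(1+μ/w) for each e ∈ p_j, starting from congestion function c_{i-1} and ending at c_i. Let D_{i-1} = ∑_e c_{i-1}(e), D_i = ∑_e c_i(e), and α_i = ∑_j min_{p ∈ P_j} ∑_{e∈p} c_i(e). If each p_j is a shortest path with respect to the congestion just before routing j, then D_i ≤ D_{i-1} + α_i·μ/w, and hence (using D_i/α_i ≥ 1/(rw)) D_i ≤ D_{i-1}/(1-rμ). -/

import Mathlib

/-- One window of the routing protocol: packets `0,…,N-1` are routed one by one, each along a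
path that is shortest with respect to the congestion just before it is routed, and each routed
path multiplies the congestion of its links by `(1+μ/w)`.  Then
`D_i ≤ D_{i-1} + α_i·μ/w`, and hence, if `D_i/α_i ≥ 1/(rw)`, `D_i ≤ D_{i-1}/(1-rμ)`. -/
theorem stmt_7 {Link : Type*} [Fintype Link] [DecidableEq Link]
    (w r μ : ℝ) (hw : 0 < w) (hμ : 0 < μ) (hrμ0 : 0 < r * μ) (hrμ1 : r * μ < 1)
    (N : ℕ) (P : Fin N → Finset (Finset Link)) (hP : ∀ j, (P j).Nonempty)
    (p : Fin N → Finset Link) (hpmem : ∀ j, p j ∈ P j)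
    (c : ℕ → Link → ℝ)                       -- c j = congestion after routing the first j packets
    (hcnn : ∀ e, 0 ≤ c 0 e)
    (hstep : ∀ (j : Fin N) (e : Link),
      c (j + 1) e = if e ∈ p j then c j e * (1 + μ / w) else c j e)
    (hshort : ∀ (j : Fin N), ∀ q ∈ P j, (∑ e ∈ p j, c j e) ≤ ∑ e ∈ q, c j e)
    (Dprev Di αi : ℝ)
    (hDprev : Dprev = ∑ e, c 0 e)
    (hDi : Di = ∑ e, c N e)
    (hαi : αi = ∑ j : Fin N, (P j).inf' (hP j) (fun q => ∑ e ∈ q, c N e)) :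
    Di ≤ Dprev + αi * μ / w ∧ (αi ≤ r * w * Di → Di ≤ Dprev / (1 - r * μ)) := by
  have hμw : 0 < μ / w := div_pos hμ hw
  have h1μw : (1:ℝ) ≤ 1 + μ / w := by linarith
  -- nonnegativity of congestion
  have hnn : ∀ m : ℕ, m ≤ N → ∀ e, 0 ≤ c m e := by
    intro m
    induction m with
    | zero => intro _ e; exact hcnn e
    | succ k ih =>
      intro hk e
      have hkN : k < N := hk
      have hk' : k ≤ N := le_of_lt hkN
      have h := hstep ⟨k, hkN⟩ e
      simp only [Fin.val_mk] at h
      rw [h]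
      split_ifs with he
      · exact mul_nonneg (ih hk' e) (by linarith)
      · exact ih hk' e
  -- one-step monotonicity
  have hmono1 : ∀ k : ℕ, k < N → ∀ e, c k e ≤ c (k + 1) e := by
    intro k hkN e
    have h := hstep ⟨k, hkN⟩ e
    simp only [Fin.val_mk] at h
    rw [h]
    split_ifs with he
    · nlinarith [hnn k (le_of_lt hkN) e]
    · exact le_rfl
  -- monotonicity up to N
  have hmono : ∀ m : ℕ, m ≤ N → ∀ e, c m e ≤ c N e := by
    have key : ∀ d m : ℕ, m + d ≤ N → ∀ e, c m e ≤ c (m + d) e := by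
      intro d
      induction d with
      | zero => intro m _ e; simp
      | succ k ih =>
        intro m hm e
        have h1 : m + k < N := by omega
        calc c m e ≤ c (m + k) e := ih m (by omega) e
          _ ≤ c (m + k + 1) e := hmono1 (m + k) h1 e
          _ = c (m + (k + 1)) e := by ring_nf
    intro m hm e
    have := key (N - m) m (by omega) e
    rwa [Nat.add_sub_cancel' hm] at this
  -- the routed-path sum is at most the inf of final-congestion path sums
  have hSB : ∀ j : Fin N, (∑ e ∈ p j, c j e) ≤ (P j).inf' (hP j) (fun q => ∑ e ∈ q, c N e) := by
    intro j
    apply Finset.le_inf'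
    intro q hq
    calc (∑ e ∈ p j, c j e) ≤ ∑ e ∈ q, c j e := hshort j q hq
      _ ≤ ∑ e ∈ q, c N e :=
        Finset.sum_le_sum fun e _ => hmono j (le_of_lt j.isLt) e
  -- one-step sum identity
  have hstepsum : ∀ j : Fin N,
      (∑ e, c (j + 1) e) = (∑ e, c j e) + (μ / w) * ∑ e ∈ p j, c j e := by
    intro j
    have : (∑ e, c (j + 1) e)
        = ∑ e, (c j e + if e ∈ p j then c j e * (μ / w) else 0) := by
      apply Finset.sum_congr rfl
      intro e _
      rw [hstep j e]
      split_ifs <;> ring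
    rw [this, Finset.sum_add_distrib]
    congr 1
    rw [Finset.sum_ite_mem, Finset.univ_inter, Finset.mul_sum]
    apply Finset.sum_congr rfl
    intro e _; ring
  -- telescoping
  have tele : (∑ e, c N e) - (∑ e, c 0 e)
      = ∑ j : Fin N, ((∑ e, c ((j : ℕ) + 1) e) - ∑ e, c (j : ℕ) e) := by
    rw [Fin.sum_univ_eq_sum_range (fun j => (∑ e, c (j + 1) e) - ∑ e, c j e) N]
    exact (Finset.sum_range_sub (fun m => ∑ e, c m e) N).symm
  have main : Di ≤ Dprev + αi * μ / w := by
    have hb : (∑ j : Fin N, ((∑ e, c ((j : ℕ) + 1) e) - ∑ e, c (j : ℕ) e))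
        ≤ ∑ j : Fin N, (μ / w) * (P j).inf' (hP j) (fun q => ∑ e ∈ q, c N e) := by
      apply Finset.sum_le_sum
      intro j _
      rw [hstepsum j]
      have := hSB j
      nlinarith
    rw [hDi, hDprev, hαi]
    have := tele ▸ hb
    rw [← Finset.mul_sum] at this
    have h2 : (∑ j : Fin N, (P j).inf' (hP j) fun q => ∑ e ∈ q, c N e) * μ / w
        = μ / w * ∑ j : Fin N, (P j).inf' (hP j) fun q => ∑ e ∈ q, c N e := by ring
    linarith [this, h2.le]
  refine ⟨main, fun hα => ?_⟩
  have h3 : αi * μ / w ≤ r * μ * Di := by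
    have := mul_le_mul_of_nonneg_right hα (le_of_lt hμw)
    calc αi * μ / w = αi * (μ / w) := by ring
      _ ≤ r * w * Di * (μ / w) := this
      _ = r * μ * Di := by field_simp
  rw [le_div_iff₀ (by linarith : (0:ℝ) < 1 - r * μ)]
  nlinarith
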